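/- arXiv:1206.3044 — 2 statements merged into one kernel-verified Lean document; each statement's English description precedes it below -/
import Mathlib

section
/- Let H be a real separable Hilbert space, M a σ-finite Borel measure on H∖{0} with ∫ min(1,‖x‖²) M(dx) < ∞, and let e(dt) = e^{-t} dt be the standard exponential distribution on (0,∞). Then the mixture M^(e)(A) := ∫₀^∞ M(t^{-1}A) e^{-t} dt satisfies ∫_{H∖{0}} min(1,‖y‖²) M^(e)(dy) ≤ 2 ∫_{0<‖x‖≤1} ‖x‖² M(dx) + K · M({‖x‖ > 1}) < ∞ for some constant K, so M^(e) is a Lévy spectral measure. -/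
open MeasureTheory Set

lemma lint_exp_one : ∫⁻ t in Set.Ioi (0:ℝ), ENNReal.ofReal (Real.exp (-t)) = 1 := by
  rw [← MeasureTheory.ofReal_integral_eq_lintegral_ofReal]
  · rw [integral_exp_neg_Ioi_zero, ENNReal.ofReal_one]
  · exact (by simpa using exp_neg_integrableOn_Ioi 0 one_pos : IntegrableOn (fun x : ℝ => Real.exp (-x)) (Ioi 0))
  · exact Filter.Eventually.of_forall fun t => (Real.exp_pos _).le

lemma lint_exp_sq : ∫⁻ t in Set.Ioi (0:ℝ), ENNReal.ofReal (Real.exp (-t) * t ^ 2) = 2 := by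
  have h3 : (0:ℝ) < 3 := by norm_num
  have heq : ∫⁻ t in Set.Ioi (0:ℝ), ENNReal.ofReal (Real.exp (-t) * t ^ 2)
      = ∫⁻ t in Set.Ioi (0:ℝ), ENNReal.ofReal (Real.exp (-t) * t ^ ((3:ℝ) - 1)) :=
    lintegral_congr fun t => by rw [show (3:ℝ) - 1 = 2 by norm_num, Real.rpow_two]
  rw [heq, ← MeasureTheory.ofReal_integral_eq_lintegral_ofReal
      (Real.GammaIntegral_convergent h3)
      (Filter.Eventually.of_forall fun t => by
        show (0:ℝ) ≤ Real.exp (-t) * t ^ ((3:ℝ) - 1)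
        rw [show (3:ℝ) - 1 = 2 by norm_num, Real.rpow_two]; positivity),
    ← Real.Gamma_eq_integral h3,
    show Real.Gamma 3 = 2 by
      rw [show (3:ℝ) = (2:ℕ) + 1 by norm_num, Real.Gamma_nat_eq_factorial]; norm_num]
  norm_num

/-- The exponential mixture `M^(e)` of a Lévy spectral measure `M` on a real separable
Hilbert space is again a Lévy spectral measure, with the explicit bound
`∫ min(1,‖y‖²) dM^(e) ≤ 2 ∫_{0<‖x‖≤1} ‖x‖² dM + K · M{‖x‖>1} < ∞`. -/
theorem exp_mixture_is_levy_measure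
    {H : Type*} [NormedAddCommGroup H] [InnerProductSpace ℝ H]
    [SecondCountableTopology H] [CompleteSpace H]
    [MeasurableSpace H] [BorelSpace H]
    (M : Measure H) [SigmaFinite M] (hM0 : M {0} = 0)
    (hM : (∫⁻ x, ENNReal.ofReal (min 1 (‖x‖ ^ 2)) ∂M) < ⊤) :
    ∃ K : ℝ, 0 ≤ K ∧
      (∫⁻ y, ENNReal.ofReal (min 1 (‖y‖ ^ 2))
          ∂(Measure.map (fun p : ℝ × H => p.1 • p.2)
            ((((volume : Measure ℝ).restrict (Ioi 0)).withDensity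
                (fun t => ENNReal.ofReal (Real.exp (-t)))).prod M)))
        ≤ 2 * (∫⁻ x in {x : H | 0 < ‖x‖ ∧ ‖x‖ ≤ 1}, ENNReal.ofReal (‖x‖ ^ 2) ∂M)
            + ENNReal.ofReal K * M {x : H | 1 < ‖x‖}
      ∧ (∫⁻ y, ENNReal.ofReal (min 1 (‖y‖ ^ 2))
          ∂(Measure.map (fun p : ℝ × H => p.1 • p.2)
            ((((volume : Measure ℝ).restrict (Ioi 0)).withDensity
                (fun t => ENNReal.ofReal (Real.exp (-t)))).prod M))) < ⊤ := by
  set ν : Measure ℝ := (((volume : Measure ℝ).restrict (Ioi 0)).withDensity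
      (fun t => ENNReal.ofReal (Real.exp (-t)))) with hν
  have hwmeas : Measurable fun t : ℝ => ENNReal.ofReal (Real.exp (-t)) :=
    (Real.measurable_exp.comp measurable_neg).ennreal_ofReal
  haveI : IsFiniteMeasure ν := by
    constructor
    rw [hν, withDensity_apply _ MeasurableSet.univ, Measure.restrict_univ]
    rw [show (∫⁻ t, ENNReal.ofReal (Real.exp (-t)) ∂((volume : Measure ℝ).restrict (Ioi 0)))
        = ∫⁻ t in Set.Ioi (0:ℝ), ENNReal.ofReal (Real.exp (-t)) from rfl, lint_exp_one]
    exact ENNReal.one_lt_top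
  set f : H → ENNReal := fun y => ENNReal.ofReal (min 1 (‖y‖ ^ 2)) with hfdef
  have hf : Measurable f :=
    (measurable_const.min ((measurable_norm).pow_const 2)).ennreal_ofReal
  have hsmul : Measurable fun p : ℝ × H => p.1 • p.2 := measurable_fst.smul measurable_snd
  set g : H → ENNReal := fun x => ∫⁻ t in Set.Ioi (0:ℝ),
      ENNReal.ofReal (Real.exp (-t)) * f (t • x) with hgdef
  have key : (∫⁻ y, f y ∂(Measure.map (fun p : ℝ × H => p.1 • p.2) (ν.prod M)))
      = ∫⁻ x, g x ∂M := by
    rw [lintegral_map hf hsmul, lintegral_prod_symm (fun p : ℝ × H => f (p.1 • p.2)) ((hf.comp hsmul).aemeasurable)]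
    refine lintegral_congr fun x => ?_
    show (∫⁻ t : ℝ, f (t • x) ∂ν) = g x
    rw [hν, lintegral_withDensity_eq_lintegral_mul _ hwmeas
      (show Measurable fun t : ℝ => f (t • x) from hf.comp (measurable_id.smul_const x))]
    rfl
  -- pointwise bounds
  have hg1 : ∀ x : H, g x ≤ 1 := by
    intro x
    calc g x ≤ ∫⁻ t in Set.Ioi (0:ℝ), ENNReal.ofReal (Real.exp (-t)) * 1 :=
          lintegral_mono fun t => mul_le_mul_right
            (ENNReal.ofReal_le_one.mpr (min_le_left _ _)) _
      _ = 1 := by simp only [mul_one]; exact lint_exp_one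
  have hg2 : ∀ x : H, g x ≤ 2 * ENNReal.ofReal (‖x‖ ^ 2) := by
    intro x
    have hb : ∀ t : ℝ, f (t • x) ≤ ENNReal.ofReal (t ^ 2 * ‖x‖ ^ 2) := by
      intro t
      have : ‖t • x‖ ^ 2 = t ^ 2 * ‖x‖ ^ 2 := by
        rw [norm_smul, mul_pow, Real.norm_eq_abs, sq_abs]
      exact ENNReal.ofReal_le_ofReal (by rw [← this]; exact min_le_right _ _)
    calc g x ≤ ∫⁻ t in Set.Ioi (0:ℝ),
          ENNReal.ofReal (Real.exp (-t)) * ENNReal.ofReal (t ^ 2 * ‖x‖ ^ 2) :=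
          lintegral_mono fun t => mul_le_mul_right (hb t) _
      _ = ∫⁻ t in Set.Ioi (0:ℝ),
          ENNReal.ofReal (Real.exp (-t) * t ^ 2) * ENNReal.ofReal (‖x‖ ^ 2) := by
          refine lintegral_congr fun t => ?_
          rw [← ENNReal.ofReal_mul (Real.exp_pos _).le,
            ← ENNReal.ofReal_mul (by positivity), mul_assoc]
      _ = (∫⁻ t in Set.Ioi (0:ℝ), ENNReal.ofReal (Real.exp (-t) * t ^ 2))
            * ENNReal.ofReal (‖x‖ ^ 2) :=
          lintegral_mul_const' _ _ ENNReal.ofReal_ne_top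
      _ = 2 * ENNReal.ofReal (‖x‖ ^ 2) := by rw [lint_exp_sq]
  -- the sets
  set A : Set H := {x : H | 0 < ‖x‖ ∧ ‖x‖ ≤ 1} with hAdef
  set B : Set H := {x : H | 1 < ‖x‖} with hBdef
  have hA : MeasurableSet A :=
    (measurableSet_lt measurable_const measurable_norm).inter
      (measurableSet_le measurable_norm measurable_const)
  have hB : MeasurableSet B := measurableSet_lt measurable_const measurable_norm
  have hAB : Disjoint A B := by
    rw [Set.disjoint_left]
    rintro x ⟨_, hx1⟩ hx2
    exact absurd hx2 (not_lt.mpr hx1)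
  have hcompl : ({(0:H)}ᶜ : Set H) = A ∪ B := by
    ext x
    simp only [mem_compl_iff, mem_singleton_iff, mem_union, hAdef, hBdef, mem_setOf_eq]
    constructor
    · intro h
      have hn : 0 < ‖x‖ := norm_pos_iff.mpr h
      rcases le_or_gt ‖x‖ 1 with h1 | h1
      · exact Or.inl ⟨hn, h1⟩
      · exact Or.inr h1
    · rintro (⟨hn, _⟩ | h1)
      · exact norm_pos_iff.mp hn
      · exact norm_pos_iff.mp (lt_trans one_pos h1)
  have hsplit : ∫⁻ x, g x ∂M = ∫⁻ x in A, g x ∂M + ∫⁻ x in B, g x ∂M := by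
    rw [← lintegral_add_compl g (measurableSet_singleton (0:H)),
      setLIntegral_measure_zero _ _ hM0, zero_add, hcompl, lintegral_union hB hAB]
  have hbA : ∫⁻ x in A, g x ∂M ≤ 2 * ∫⁻ x in A, ENNReal.ofReal (‖x‖ ^ 2) ∂M := by
    rw [← lintegral_const_mul 2 ((measurable_norm.pow_const 2).ennreal_ofReal)]
    exact setLIntegral_mono (((measurable_norm.pow_const 2).ennreal_ofReal).const_mul 2)
      fun x _ => hg2 x
  have hbB : ∫⁻ x in B, g x ∂M ≤ M B := by
    calc ∫⁻ x in B, g x ∂M ≤ ∫⁻ _ in B, 1 ∂M :=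
          setLIntegral_mono measurable_const fun x _ => hg1 x
      _ = M B := by rw [setLIntegral_one]
  -- finiteness of the right-hand side
  have hAfin : (∫⁻ x in A, ENNReal.ofReal (‖x‖ ^ 2) ∂M) < ⊤ := by
    have : (∫⁻ x in A, ENNReal.ofReal (‖x‖ ^ 2) ∂M)
        = ∫⁻ x in A, ENNReal.ofReal (min 1 (‖x‖ ^ 2)) ∂M := by
      refine setLIntegral_congr_fun hA (fun x hx => ?_)
      rw [min_eq_right]
      nlinarith [hx.1, hx.2, norm_nonneg x]
    rw [this]
    exact lt_of_le_of_lt (setLIntegral_le_lintegral _ _) hM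
  have hBfin : M B < ⊤ := by
    have : M B = ∫⁻ x in B, ENNReal.ofReal (min 1 (‖x‖ ^ 2)) ∂M := by
      rw [← setLIntegral_one]
      refine setLIntegral_congr_fun hB (fun x hx => ?_)
      rw [min_eq_left (by nlinarith [mem_setOf_eq ▸ hx] : (1:ℝ) ≤ ‖x‖ ^ 2)]
      simp
    rw [this]
    exact lt_of_le_of_lt (setLIntegral_le_lintegral _ _) hM
  refine ⟨1, zero_le_one, ?_, ?_⟩
  · rw [key, hsplit, ENNReal.ofReal_one, one_mul]
    exact add_le_add hbA hbB
  · rw [key, hsplit]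
    refine ENNReal.add_lt_top.mpr ⟨lt_of_le_of_lt hbA ?_, lt_of_le_of_lt hbB hBfin⟩
    exact ENNReal.mul_lt_top (by norm_num) hAfin
end

section
/- Let 0 < α < 2 and let M be a Borel measure on a real separable Hilbert space H with M({0}) = 0 and ∫_{H∖{0}} ‖x‖^α M(dx) < ∞. Then M^(ρ_α)(A) := ∫₀^∞ ∫_{H∖{0}} 1_A(tx) M(dx) t^{-α-1} e^{-t} dt satisfies ∫_{H∖{0}} min(1,‖y‖²) M^(ρ_α)(dy) < ∞, i.e., M^(ρ_α) is a Lévy spectral measure. -/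
open MeasureTheory Set
set_option maxHeartbeats 1000000

lemma inner_bound (α : ℝ) (hα0 : 0 < α) (hα2 : α < 2) (r : ℝ) (hr : 0 ≤ r) :
    (∫⁻ t in Ioi (0:ℝ), ENNReal.ofReal (t ^ (-α - 1) * Real.exp (-t) * min 1 ((t * r) ^ 2)))
      ≤ ENNReal.ofReal (2 / ((2 - α) * α)) * ENNReal.ofReal (r ^ α) := by
  rcases eq_or_lt_of_le hr with h0 | hr
  · simp [← h0]
  · set c : ℝ := r⁻¹ with hc
    have hcpos : 0 < c := inv_pos.mpr hr
    have hra : 0 < r ^ α := Real.rpow_pos_of_pos hr _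
    have hsplit : Ioi (0:ℝ) = Ioc 0 c ∪ Ioi c := (Ioc_union_Ioi_eq_Ioi hcpos.le).symm
    rw [hsplit, lintegral_union measurableSet_Ioi (Ioc_disjoint_Ioi le_rfl)]
    have hcr : c ^ (2 - α) = r ^ (α - 2) := by
      rw [hc, ← Real.rpow_neg_one r, ← Real.rpow_mul hr.le]
      congr 1; ring
    have b1 : (∫⁻ t in Ioc (0:ℝ) c, ENNReal.ofReal (t ^ (-α - 1) * Real.exp (-t) * min 1 ((t * r) ^ 2)))
        ≤ ENNReal.ofReal (r ^ α / (2 - α)) := by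
      calc (∫⁻ t in Ioc (0:ℝ) c, ENNReal.ofReal (t ^ (-α - 1) * Real.exp (-t) * min 1 ((t * r) ^ 2)))
          ≤ ∫⁻ t in Ioc (0:ℝ) c, ENNReal.ofReal (r ^ 2 * t ^ (1 - α)) := by
            refine setLIntegral_mono' measurableSet_Ioc fun t ht => ?_
            refine ENNReal.ofReal_le_ofReal ?_
            have ht0 : 0 < t := ht.1
            have h1 : min 1 ((t * r) ^ 2) ≤ (t * r) ^ 2 := min_le_right _ _
            have h2 : Real.exp (-t) ≤ 1 := Real.exp_le_one_iff.mpr (by linarith)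
            have h3 : t ^ (-α - 1) * (t * r) ^ 2 = r ^ 2 * t ^ (1 - α) := by
              rw [mul_pow, ← Real.rpow_natCast t 2,
                show t ^ (-α - 1) * (t ^ ((2:ℕ):ℝ) * r ^ 2)
                  = t ^ (-α - 1) * t ^ ((2:ℕ):ℝ) * r ^ 2 from by ring,
                ← Real.rpow_add ht0,
                show -α - 1 + ((2:ℕ):ℝ) = 1 - α from by push_cast; ring]
              ring
            calc t ^ (-α - 1) * Real.exp (-t) * min 1 ((t * r) ^ 2)
                ≤ t ^ (-α - 1) * 1 * ((t * r) ^ 2) := by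
                  apply mul_le_mul
                  · exact mul_le_mul_of_nonneg_left h2 (Real.rpow_nonneg ht0.le _)
                  · exact h1
                  · exact le_min zero_le_one (sq_nonneg _)
                  · positivity
              _ = r ^ 2 * t ^ (1 - α) := by rw [mul_one]; exact h3
        _ = ENNReal.ofReal (∫ t in Ioc (0:ℝ) c, r ^ 2 * t ^ (1 - α)) := by
            rw [← ofReal_integral_eq_lintegral_ofReal]
            · exact Integrable.const_mul
                ((intervalIntegrable_iff_integrableOn_Ioc_of_le hcpos.le).mp
                  (intervalIntegral.intervalIntegrable_rpow' (by linarith))) _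
            · filter_upwards [self_mem_ae_restrict measurableSet_Ioc] with t ht
              have := ht.1
              positivity
        _ ≤ ENNReal.ofReal (r ^ α / (2 - α)) := by
            apply ENNReal.ofReal_le_ofReal
            rw [MeasureTheory.integral_const_mul, ← intervalIntegral.integral_of_le hcpos.le,
              integral_rpow (Or.inl (by linarith))]
            have h0 : (0:ℝ) ^ (1 - α + 1) = 0 := Real.zero_rpow (by linarith)
            have h1 : (1 - α + 1) = 2 - α := by ring
            rw [h0, h1, hcr]
            have : r ^ 2 * (r ^ (α - 2)) = r ^ α := by
              rw [← Real.rpow_natCast r 2, ← Real.rpow_add hr]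
              norm_num
            rw [sub_zero, ← mul_div_assoc, this]
    have b2 : (∫⁻ t in Ioi c, ENNReal.ofReal (t ^ (-α - 1) * Real.exp (-t) * min 1 ((t * r) ^ 2)))
        ≤ ENNReal.ofReal (r ^ α / α) := by
      calc (∫⁻ t in Ioi c, ENNReal.ofReal (t ^ (-α - 1) * Real.exp (-t) * min 1 ((t * r) ^ 2)))
          ≤ ∫⁻ t in Ioi c, ENNReal.ofReal (t ^ (-α - 1)) := by
            refine setLIntegral_mono' measurableSet_Ioi fun t ht => ?_
            refine ENNReal.ofReal_le_ofReal ?_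
            have ht0 : 0 < t := hcpos.trans ht
            have h2 : Real.exp (-t) ≤ 1 := Real.exp_le_one_iff.mpr (by linarith)
            calc t ^ (-α - 1) * Real.exp (-t) * min 1 ((t * r) ^ 2)
                ≤ t ^ (-α - 1) * 1 * 1 := by
                  apply mul_le_mul
                  · exact mul_le_mul_of_nonneg_left h2 (Real.rpow_nonneg ht0.le _)
                  · exact min_le_left _ _
                  · exact le_min zero_le_one (sq_nonneg _)
                  · positivity
              _ = t ^ (-α - 1) := by ring
        _ = ENNReal.ofReal (∫ t in Ioi c, t ^ (-α - 1)) := by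
            rw [← ofReal_integral_eq_lintegral_ofReal]
            · exact integrableOn_Ioi_rpow_of_lt (by linarith) hcpos
            · filter_upwards [self_mem_ae_restrict measurableSet_Ioi] with t ht
              have := hcpos.trans ht
              positivity
        _ ≤ ENNReal.ofReal (r ^ α / α) := by
            apply ENNReal.ofReal_le_ofReal
            rw [integral_Ioi_rpow_of_lt (by linarith) hcpos]
            have h1 : -α - 1 + 1 = -α := by ring
            rw [h1]
            have : c ^ (-α) = r ^ α := by
              rw [hc, ← Real.rpow_neg_one r, ← Real.rpow_mul hr.le]
              ring_nf
            rw [this]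
            have hαne : α ≠ 0 := ne_of_gt hα0
            field_simp
            exact le_rfl
    calc _ ≤ ENNReal.ofReal (r ^ α / (2 - α)) + ENNReal.ofReal (r ^ α / α) := add_le_add b1 b2
      _ = ENNReal.ofReal (r ^ α / (2 - α) + r ^ α / α) :=
          (ENNReal.ofReal_add (div_nonneg hra.le (by linarith)) (div_nonneg hra.le hα0.le)).symm
      _ ≤ _ := by
          rw [← ENNReal.ofReal_mul (div_nonneg (by norm_num) (by nlinarith))]
          apply ENNReal.ofReal_le_ofReal
          have h2a : (2:ℝ) - α ≠ 0 := by linarith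
          have hαne : α ≠ 0 := ne_of_gt hα0
          have : r ^ α / (2 - α) + r ^ α / α = 2 / ((2 - α) * α) * r ^ α := by
            field_simp; ring
          exact le_of_eq this

theorem rho_alpha_mixture_is_levy_measure
    {H : Type*} [NormedAddCommGroup H] [InnerProductSpace ℝ H]
    [SecondCountableTopology H] [CompleteSpace H]
    [MeasurableSpace H] [BorelSpace H]
    (α : ℝ) (hα0 : 0 < α) (hα2 : α < 2)
    (M : Measure H) [SigmaFinite M] (hM0 : M {0} = 0)
    (hM : (∫⁻ x, ENNReal.ofReal (‖x‖ ^ α) ∂M) < ⊤) :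
    (∫⁻ y, ENNReal.ofReal (min 1 (‖y‖ ^ 2))
        ∂(Measure.map (fun p : ℝ × H => p.1 • p.2)
          ((((volume : Measure ℝ).restrict (Ioi 0)).withDensity
              (fun t => ENNReal.ofReal (t ^ (-α - 1) * Real.exp (-t)))).prod M))) < ⊤ := by
  have hmeas_smul : Measurable (fun p : ℝ × H => p.1 • p.2) :=
    measurable_fst.smul measurable_snd
  have hf : Measurable (fun y : H => ENNReal.ofReal (min 1 (‖y‖ ^ 2))) := by
    measurability
  have hdens : Measurable (fun t : ℝ => ENNReal.ofReal (t ^ (-α - 1) * Real.exp (-t))) := by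
    fun_prop
  rw [lintegral_map hf hmeas_smul,
    lintegral_prod_symm (fun p : ℝ × H => ENNReal.ofReal (min 1 (‖p.1 • p.2‖ ^ 2)))
      ((hf.comp hmeas_smul).aemeasurable)]
  have key : ∀ x : H, (∫⁻ t, ENNReal.ofReal (min 1 (‖t • x‖ ^ 2))
      ∂(((volume : Measure ℝ).restrict (Ioi 0)).withDensity
          (fun t => ENNReal.ofReal (t ^ (-α - 1) * Real.exp (-t)))))
      ≤ ENNReal.ofReal (2 / ((2 - α) * α)) * ENNReal.ofReal (‖x‖ ^ α) := by
    intro x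
    rw [lintegral_withDensity_eq_lintegral_mul _ hdens (show Measurable fun t : ℝ => ENNReal.ofReal (min 1 (‖t • x‖ ^ 2)) from
        hf.comp (measurable_id.smul measurable_const))]
    simp only [Pi.mul_apply]
    have hcongr : ∀ᵐ t ∂((volume : Measure ℝ).restrict (Ioi 0)),
        ENNReal.ofReal (t ^ (-α - 1) * Real.exp (-t)) * ENNReal.ofReal (min 1 (‖t • x‖ ^ 2))
        = ENNReal.ofReal (t ^ (-α - 1) * Real.exp (-t) * min 1 ((t * ‖x‖) ^ 2)) := by
      filter_upwards [self_mem_ae_restrict measurableSet_Ioi] with t ht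
      have ht0 : (0:ℝ) < t := ht
      have hd0 : 0 ≤ t ^ (-α - 1) * Real.exp (-t) := by positivity
      rw [norm_smul, Real.norm_eq_abs, abs_of_pos ht0, mul_pow,
        ← ENNReal.ofReal_mul hd0]
    rw [lintegral_congr_ae hcongr]
    exact inner_bound α hα0 hα2 ‖x‖ (norm_nonneg x)
  calc (∫⁻ x, (∫⁻ t, ENNReal.ofReal (min 1 (‖t • x‖ ^ 2))
          ∂(((volume : Measure ℝ).restrict (Ioi 0)).withDensity
              (fun t => ENNReal.ofReal (t ^ (-α - 1) * Real.exp (-t))))) ∂M)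
      ≤ ∫⁻ x, ENNReal.ofReal (2 / ((2 - α) * α)) * ENNReal.ofReal (‖x‖ ^ α) ∂M :=
        lintegral_mono key
    _ = ENNReal.ofReal (2 / ((2 - α) * α)) * ∫⁻ x, ENNReal.ofReal (‖x‖ ^ α) ∂M := by
        rw [lintegral_const_mul]
        fun_prop
    _ < ⊤ := ENNReal.mul_lt_top ENNReal.ofReal_lt_top hM
end
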